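/- arXiv:0901.2597 — 2 statements merged into one kernel-verified Lean document; each statement's English description precedes it below -/
import Mathlib

section
/- Let d be a complex number, let α = (α_i)_{i≥0} be the arithmetical sequence with α_i = i·d, and let β = (β_i)_{i≥0} be the square sequence with β_i = i². Define D(n) = det(P_{α,β}(n)) for n ≥ 1 and D(0) = 1. Then for every n ≥ 3, D(n) = -d·D(n-2) + 2d²·D(n-3). -/
open Matrix
open Finset

/-- Entry `P_{i,j}` of the generalized Pascal triangle associated to sequences `α`, `β`:
`P_{i,0} = α i`, `P_{0,j} = β j`, and `P_{i,j} = P_{i-1,j} + P_{i,j-1}` for `i, j ≥ 1`. -/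
def pascalEntry {R : Type*} [CommRing R] (α β : ℕ → R) : ℕ → ℕ → R
  | i, 0 => α i
  | 0, j + 1 => β (j + 1)
  | i + 1, j + 1 => pascalEntry α β i (j + 1) + pascalEntry α β (i + 1) j

/-- The generalized Pascal triangle `P_{α,β}(n)`. -/
def genPascal {R : Type*} [CommRing R] (α β : ℕ → R) (n : ℕ) :
    Matrix (Fin n) (Fin n) R :=
  Matrix.of fun i j => pascalEntry α β (i : ℕ) (j : ℕ)

/-- The Töplitz matrix `T_{α,β}(n)`: `t_{i,j} = α_{i-j}` if `i ≥ j`, else `β_{j-i}`. -/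
def toeplitz {R : Type*} [CommRing R] (α β : ℕ → R) (n : ℕ) :
    Matrix (Fin n) (Fin n) R :=
  Matrix.of fun i j => if (j : ℕ) ≤ (i : ℕ) then α ((i : ℕ) - (j : ℕ)) else β ((j : ℕ) - (i : ℕ))

/-- The unipotent lower triangular matrix `L(n)` with `L_{i,j} = C(i,j)` for `i ≥ j`. -/
def lowerL (R : Type*) [CommRing R] (n : ℕ) : Matrix (Fin n) (Fin n) R :=
  Matrix.of fun i j => if (j : ℕ) ≤ (i : ℕ) then ((i : ℕ).choose (j : ℕ) : R) else 0

/-- The binomial inverse transform `α̂_i = ∑_{k=0}^{i} (-1)^{i+k} C(i,k) α_k`. -/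
def hatSeq {R : Type*} [CommRing R] (α : ℕ → R) (i : ℕ) : R :=
  ∑ k ∈ Finset.range (i + 1), (-1 : R) ^ (i + k) * (i.choose k : R) * α k

/-- The binomial transform `α̌_i = ∑_{k=0}^{i} C(i,k) α_k`. -/
def checkSeq {R : Type*} [CommRing R] (α : ℕ → R) (i : ℕ) : R :=
  ∑ k ∈ Finset.range (i + 1), (i.choose k : R) * α k

noncomputable def Bmat (d : ℂ) (n : ℕ) : Matrix (Fin n) (Fin n) ℂ :=
  Matrix.of fun k l => (if (k:ℕ) = (l:ℕ)+1 then d else 0)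
    + (if (l:ℕ) = (k:ℕ)+1 then 1 else 0) + (if (l:ℕ) = (k:ℕ)+2 then 2 else 0)

lemma lowerL_apply (n : ℕ) (i j : Fin n) : lowerL ℂ n i j = (((i:ℕ).choose (j:ℕ) : ℕ) : ℂ) := by
  show (if (j : ℕ) ≤ (i : ℕ) then (((i:ℕ).choose (j:ℕ) : ℕ) : ℂ) else 0) = _
  split_ifs with h
  · rfl
  · rw [Nat.choose_eq_zero_of_lt (by omega)]; simp


lemma vand (i m : ℕ) : ∀ j, ∑ l ∈ Finset.range (j+1), i.choose (m + l) * j.choose l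
    = (i+j).choose (m + j) := by
  intro j
  induction j generalizing m with
  | zero => simp
  | succ j ih =>
    rw [Finset.sum_range_succ' (fun l => i.choose (m + l) * (j+1).choose l)]
    have h1 : ∀ l, i.choose (m + (l+1)) * (j+1).choose (l+1)
        = i.choose ((m+1) + l) * j.choose l + i.choose (m + (l+1)) * j.choose (l+1) := by
      intro l
      have e : m + (l+1) = (m+1)+l := by omega
      rw [Nat.choose_succ_succ, Nat.mul_add, e]
    simp only [h1]
    rw [Finset.sum_add_distrib, ih (m+1)]
    have h2 : ∑ l ∈ Finset.range (j+1), i.choose (m + (l+1)) * j.choose (l+1)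
        + i.choose (m + 0) * (j+1).choose 0
        = ∑ l ∈ Finset.range (j+2), i.choose (m + l) * j.choose l := by
      rw [Finset.sum_range_succ' (fun l => i.choose (m + l) * j.choose l)]
      simp
    rw [add_assoc, h2, Finset.sum_range_succ, Nat.choose_succ_self, Nat.mul_zero, add_zero, ih m]
    have e1 : i + (j+1) = (i + j) + 1 := by omega
    have e2 : m+1+j = m+j+1 := by omega
    rw [e1, e2]
    have e3 : m + (j+1) = (m+j)+1 := by omega
    rw [e3, Nat.choose_succ_succ (i+j) (m+j), Nat.add_comm]

lemma two_mul_choose_two (j : ℕ) : 2 * ((j+1).choose 2) = (j+1) * j := by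
  induction j with
  | zero => rfl
  | succ j ih =>
    rw [Nat.choose_succ_succ' (j+1) 1, Nat.mul_add, ih, Nat.choose_one_right]
    ring


lemma pascal_closed (d : ℂ) : ∀ i j, pascalEntry (fun i => (i:ℂ) * d) (fun i => (i:ℂ)^2) i j
    = d * ((i+j).choose (j+1) : ℕ) + (((i+j).choose (i+1) : ℕ) : ℂ)
      + 2 * (((i+j).choose (i+2) : ℕ) : ℂ) := by
  intro i j
  induction i, j using pascalEntry.induct with
  | case1 i =>
    rw [pascalEntry]
    simp [Nat.choose_eq_zero_of_lt, Nat.choose_one_right]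
    ring
  | case2 j =>
    rw [pascalEntry]
    simp only [Nat.zero_add, Nat.succ_eq_add_one, Nat.choose_succ_self, Nat.choose_one_right,
      Nat.cast_zero, mul_zero, zero_add]
    have h2c : (2:ℂ) * (((j+1).choose 2 : ℕ) : ℂ) = ((j:ℂ)+1) * j := by
      have := two_mul_choose_two j
      exact_mod_cast congrArg (Nat.cast : ℕ → ℂ) this
    push_cast
    linear_combination -h2c
  | case3 i j ih1 ih2 =>
    rw [pascalEntry, ih1, ih2]
    have e1 : i + (j+1) = (i+j)+1 := by omega
    have e2 : (i+1) + j = (i+j)+1 := by omega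
    have e3 : (i+1)+(j+1) = ((i+j)+1)+1 := by omega
    rw [e1, e2, e3, Nat.choose_succ_succ' ((i+j)+1) (j+1), Nat.choose_succ_succ' ((i+j)+1) (i+1),
      Nat.choose_succ_succ' ((i+j)+1) (i+2), Nat.choose_succ_succ' (i+j) j,
      Nat.choose_succ_succ' (i+j) i, Nat.choose_succ_succ' (i+j) (i+1)]
    push_cast
    ring

lemma aux1 (x y s n : ℕ) (hy : y < n) :
    ∑ l ∈ Finset.range n, ((x.choose (s + l) : ℕ) : ℂ) * ((y.choose l : ℕ) : ℂ)
    = (((x+y).choose (s + y) : ℕ) : ℂ) := by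
  rw [← Finset.sum_subset (Finset.range_subset_range.2 (by omega : y+1 ≤ n))]
  · exact_mod_cast congrArg (Nat.cast : ℕ → ℂ) (vand x s y)
  · intro l hl hnl
    rw [Nat.choose_eq_zero_of_lt (by simp at hnl ⊢; omega : y < l)]
    simp

lemma partA (d : ℂ) (i j n : ℕ) (hi : i < n) (hj : j < n) :
    ∑ l ∈ range n, ∑ k ∈ range n,
      (i.choose k : ℂ) * (if k = l+1 then d else 0) * (j.choose l : ℂ)
    = d * (((i+j).choose (1+j) : ℕ) : ℂ) := by
  have h : ∀ l ∈ range n, (∑ k ∈ range n,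
      (i.choose k : ℂ) * (if k = l+1 then d else 0) * (j.choose l : ℂ))
      = d * (((i.choose (1+l) : ℕ) : ℂ) * ((j.choose l : ℕ) : ℂ)) := by
    intro l hl
    have e : ∀ k, (i.choose k : ℂ) * (if k = l+1 then d else 0) * (j.choose l : ℂ)
        = if k = l+1 then (i.choose k : ℂ) * d * (j.choose l : ℂ) else 0 := by
      intro k; split_ifs <;> ring
    rw [Finset.sum_congr rfl (fun k _ => e k),
      Finset.sum_ite_eq' (range n) (l+1) (fun k => (i.choose k : ℂ) * d * (j.choose l : ℂ))]
    split_ifs with h'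
    · rw [Nat.add_comm 1 l]; ring
    · rw [Nat.add_comm 1 l, Nat.choose_eq_zero_of_lt (by simp at h' hl; omega)]
      simp
  rw [Finset.sum_congr rfl h, ← Finset.mul_sum, aux1 i j 1 n hj]

lemma partB (i j n : ℕ) (hi : i < n) (hj : j < n) :
    ∑ l ∈ range n, ∑ k ∈ range n,
      (i.choose k : ℂ) * (if l = k+1 then (1:ℂ) else 0) * (j.choose l : ℂ)
    = (((i+j).choose (1+i) : ℕ) : ℂ) := by
  rw [Finset.sum_comm]
  have h : ∀ k ∈ range n, (∑ l ∈ range n,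
      (i.choose k : ℂ) * (if l = k+1 then (1:ℂ) else 0) * (j.choose l : ℂ))
      = ((j.choose (1+k) : ℕ) : ℂ) * ((i.choose k : ℕ) : ℂ) := by
    intro k hk
    have e : ∀ l, (i.choose k : ℂ) * (if l = k+1 then (1:ℂ) else 0) * (j.choose l : ℂ)
        = if l = k+1 then (j.choose (k+1) : ℂ) * (i.choose k : ℂ) else 0 := by
      intro l; split_ifs with h
      · subst h; ring
      · ring
    rw [Finset.sum_congr rfl (fun l _ => e l),
      Finset.sum_ite_eq' (range n) (k+1) (fun l => (j.choose (k+1) : ℂ) * (i.choose k : ℂ))]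
    split_ifs with h'
    · rw [Nat.add_comm 1 k]
    · rw [Nat.add_comm 1 k, Nat.choose_eq_zero_of_lt (by simp at h' hk; omega)]
      simp
  rw [Finset.sum_congr rfl h, aux1 j i 1 n hi, Nat.add_comm j i]

lemma partC (i j n : ℕ) (hi : i < n) (hj : j < n) :
    ∑ l ∈ range n, ∑ k ∈ range n,
      (i.choose k : ℂ) * (if l = k+2 then (2:ℂ) else 0) * (j.choose l : ℂ)
    = 2 * (((i+j).choose (2+i) : ℕ) : ℂ) := by
  rw [Finset.sum_comm]
  have h : ∀ k ∈ range n, (∑ l ∈ range n,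
      (i.choose k : ℂ) * (if l = k+2 then (2:ℂ) else 0) * (j.choose l : ℂ))
      = 2 * (((j.choose (2+k) : ℕ) : ℂ) * ((i.choose k : ℕ) : ℂ)) := by
    intro k hk
    have e : ∀ l, (i.choose k : ℂ) * (if l = k+2 then (2:ℂ) else 0) * (j.choose l : ℂ)
        = if l = k+2 then 2 * ((j.choose (k+2) : ℂ) * (i.choose k : ℂ)) else 0 := by
      intro l; split_ifs with h
      · subst h; ring
      · ring
    rw [Finset.sum_congr rfl (fun l _ => e l),
      Finset.sum_ite_eq' (range n) (k+2) (fun l => 2 * ((j.choose (k+2) : ℂ) * (i.choose k : ℂ)))]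
    split_ifs with h'
    · rw [Nat.add_comm 2 k]
    · rw [Nat.add_comm 2 k, Nat.choose_eq_zero_of_lt (by simp at h' hk; omega)]
      simp
  rw [Finset.sum_congr rfl h, ← Finset.mul_sum, aux1 j i 2 n hi, Nat.add_comm j i]


lemma mulEntry (d : ℂ) (n : ℕ) (i j : Fin n) :
    (lowerL ℂ n * Bmat d n * (lowerL ℂ n)ᵀ) i j
    = d * ((((i:ℕ)+(j:ℕ)).choose (1+(j:ℕ)) : ℕ) : ℂ)
      + ((((i:ℕ)+(j:ℕ)).choose (1+(i:ℕ)) : ℕ) : ℂ)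
      + 2 * ((((i:ℕ)+(j:ℕ)).choose (2+(i:ℕ)) : ℕ) : ℂ) := by
  simp only [Matrix.mul_apply, Matrix.transpose_apply, lowerL_apply, Bmat, Matrix.of_apply,
    Finset.sum_mul, mul_add, add_mul]
  have conv1 : ∀ (g : ℕ → ℕ → ℂ), ∑ x : Fin n, ∑ y : Fin n, g ↑x ↑y
      = ∑ x ∈ range n, ∑ y ∈ range n, g x y := by
    intro g
    calc ∑ x : Fin n, ∑ y : Fin n, g ↑x ↑y
        = ∑ x : Fin n, ∑ y ∈ range n, g ↑x y :=
          Finset.sum_congr rfl fun x _ => Fin.sum_univ_eq_sum_range (fun y => g ↑x y) n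
      _ = ∑ x ∈ range n, ∑ y ∈ range n, g x y :=
          Fin.sum_univ_eq_sum_range (fun x => ∑ y ∈ range n, g x y) n
  trans (∑ x ∈ range n, ∑ y ∈ range n,
      (((i:ℕ).choose y : ℂ) * (if y = x+1 then d else 0) * ((j:ℕ).choose x : ℂ)
      + ((i:ℕ).choose y : ℂ) * (if x = y+1 then (1:ℂ) else 0) * ((j:ℕ).choose x : ℂ)
      + ((i:ℕ).choose y : ℂ) * (if x = y+2 then (2:ℂ) else 0) * ((j:ℕ).choose x : ℂ)))
  · exact conv1 (fun x y => ((i:ℕ).choose y : ℂ) * (if y = x+1 then d else 0) * ((j:ℕ).choose x : ℂ)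
      + ((i:ℕ).choose y : ℂ) * (if x = y+1 then (1:ℂ) else 0) * ((j:ℕ).choose x : ℂ)
      + ((i:ℕ).choose y : ℂ) * (if x = y+2 then (2:ℂ) else 0) * ((j:ℕ).choose x : ℂ))
  · simp only [Finset.sum_add_distrib]
    rw [partA d (i:ℕ) (j:ℕ) n i.isLt j.isLt, partB (i:ℕ) (j:ℕ) n i.isLt j.isLt,
      partC (i:ℕ) (j:ℕ) n i.isLt j.isLt]

lemma det_lowerL (n : ℕ) : (lowerL ℂ n).det = 1 := by
  rw [Matrix.det_of_lowerTriangular]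
  · refine Finset.prod_eq_one fun i _ => ?_
    show (if (i:ℕ) ≤ (i:ℕ) then (((i:ℕ).choose (i:ℕ) : ℕ) : ℂ) else 0) = 1
    rw [if_pos le_rfl, Nat.choose_self, Nat.cast_one]
  · intro i j hij
    have hlt : (i:ℕ) < (j:ℕ) := hij
    show (if (j:ℕ) ≤ (i:ℕ) then (((i:ℕ).choose (j:ℕ) : ℕ) : ℂ) else 0) = 0
    rw [if_neg (by omega)]

lemma Bmat_apply (d : ℂ) (n : ℕ) (k l : Fin n) : Bmat d n k l
    = (if (k:ℕ) = (l:ℕ)+1 then d else 0)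
    + (if (l:ℕ) = (k:ℕ)+1 then 1 else 0) + (if (l:ℕ) = (k:ℕ)+2 then 2 else 0) := rfl

lemma Bmat_eq_zero (d : ℂ) (n : ℕ) (k l : Fin n) (h1 : (k:ℕ) ≠ (l:ℕ)+1)
    (h2 : (l:ℕ) ≠ (k:ℕ)+1) (h3 : (l:ℕ) ≠ (k:ℕ)+2) : Bmat d n k l = 0 := by
  rw [Bmat_apply, if_neg h1, if_neg h2, if_neg h3]; ring

lemma Bmat_congr (d : ℂ) {n1 n2 c : ℕ} (k1 l1 : Fin n1) (k2 l2 : Fin n2)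
    (hk : (k1:ℕ) + c = (k2:ℕ)) (hl : (l1:ℕ) + c = (l2:ℕ)) :
    Bmat d n2 k2 l2 = Bmat d n1 k1 l1 := by
  have e1 : ((k2:ℕ) = (l2:ℕ)+1) ↔ ((k1:ℕ) = (l1:ℕ)+1) := by omega
  have e2 : ((l2:ℕ) = (k2:ℕ)+1) ↔ ((l1:ℕ) = (k1:ℕ)+1) := by omega
  have e3 : ((l2:ℕ) = (k2:ℕ)+2) ↔ ((l1:ℕ) = (k1:ℕ)+2) := by omega
  rw [Bmat_apply, Bmat_apply, if_congr e1 rfl rfl, if_congr e2 rfl rfl, if_congr e3 rfl rfl]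

lemma sa1 {n : ℕ} (a : Fin (n+1)) :
    (((1 : Fin (n+2)).succAbove a) : ℕ) = if (a:ℕ) < 1 then (a:ℕ) else (a:ℕ)+1 := by
  rw [Fin.succAbove]
  split_ifs with h h2 h3 <;> simp_all [Fin.lt_def, Fin.val_one] <;> omega

lemma detB_rec (d : ℂ) (m : ℕ) :
    (Bmat d (m+3)).det = -d * (Bmat d (m+1)).det + 2 * d^2 * (Bmat d m).det := by
  set S : Matrix (Fin (m+2)) (Fin (m+2)) ℂ :=
    (Bmat d (m+3)).submatrix ((1 : Fin (m+3)).succAbove) Fin.succ with hSdef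
  have hS : ∀ a b, S a b = Bmat d (m+3) ((1 : Fin (m+3)).succAbove a) b.succ := fun a b => rfl
  -- Step 1: expand along column 0
  have h0 : (Bmat d (m+3)).det = -d * S.det := by
    rw [Matrix.det_succ_column_zero, Fin.sum_univ_succ, Fin.sum_univ_succ]
    have e0 : Bmat d (m+3) 0 0 = 0 := Bmat_eq_zero _ _ _ _ (by simp) (by simp) (by simp)
    have e1 : Bmat d (m+3) ((0:Fin (m+2)).succ) 0 = d := by
      rw [Bmat_apply]; norm_num
    have e2 : ∀ i : Fin (m+1), Bmat d (m+3) (i.succ.succ) 0 = 0 := fun i =>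
      Bmat_eq_zero _ _ _ _ (by simp) (by simp) (by simp)
    rw [e0, e1]
    simp only [e2, zero_mul, mul_zero, Finset.sum_const_zero, add_zero, zero_add,
      Fin.succ_zero_eq_one, Fin.val_one, Fin.val_zero, pow_one, pow_zero, one_mul, ← hSdef]
    ring
  -- entries of S's first row
  have hS0 : ∀ b : Fin (m+2), S 0 b = Bmat d (m+3) 0 b.succ := by
    intro b
    rw [hS]
    congr 1
  -- Step 2: expand S along row 0
  set T0 : Matrix (Fin (m+1)) (Fin (m+1)) ℂ := S.submatrix Fin.succ ((0:Fin (m+2)).succAbove)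
    with hT0def
  set T1 : Matrix (Fin (m+1)) (Fin (m+1)) ℂ := S.submatrix Fin.succ ((1:Fin (m+2)).succAbove)
    with hT1def
  have h1 : S.det = T0.det - 2 * T1.det := by
    rw [Matrix.det_succ_row_zero, Fin.sum_univ_succ, Fin.sum_univ_succ]
    have f0 : S 0 0 = 1 := by
      rw [hS0, Bmat_apply]; norm_num
    have f1 : S 0 ((0:Fin (m+1)).succ) = 2 := by
      rw [hS0, Bmat_apply]; norm_num; rw [Nat.mod_eq_of_lt (by omega)]; omega
    have f2 : ∀ j : Fin m, S 0 (j.succ.succ) = 0 := by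
      intro j
      rw [hS0]
      exact Bmat_eq_zero _ _ _ _ (by simp) (by simp [Fin.val_succ]) (by simp [Fin.val_succ])
    rw [f0, f1]
    simp only [f2, zero_mul, mul_zero, Finset.sum_const_zero, add_zero,
      Fin.succ_zero_eq_one, Fin.val_one, Fin.val_zero, pow_one, pow_zero, one_mul,
      ← hT0def, ← hT1def]
    ring
  -- T0 = Bmat d (m+1)
  have hT0 : T0 = Bmat d (m+1) := by
    ext a b
    rw [hT0def]
    show S a.succ ((0:Fin (m+2)).succAbove b) = _
    rw [Fin.succAbove_zero, hS]
    exact Bmat_congr d _ _ _ _ (c := 2)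
      (by rw [sa1]; simp [Fin.val_succ]) (by simp [Fin.val_succ])
  -- T1 column 0, expansion
  have hT1col : ∀ i : Fin (m+1), T1 i 0 = Bmat d (m+3) ((1:Fin (m+3)).succAbove i.succ)
      (((1:Fin (m+2)).succAbove 0).succ) := fun i => rfl
  set T2 : Matrix (Fin m) (Fin m) ℂ := T1.submatrix ((0:Fin (m+1)).succAbove) Fin.succ
    with hT2def
  have v1 : ((((1:Fin (m+2)).succAbove 0).succ : Fin (m+3)) : ℕ) = 1 := by
    rw [Fin.val_succ, sa1]; simp
  have h2 : T1.det = d * T2.det := by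
    rw [Matrix.det_succ_column_zero, Fin.sum_univ_succ]
    have v2 : (((1:Fin (m+3)).succAbove ((0 : Fin (m+1)).succ)) : ℕ) = 2 := by
      rw [sa1]; simp
    have g0 : T1 0 0 = d := by
      rw [hT1col, Bmat_apply, v1, v2]
      norm_num
    have g1 : ∀ i : Fin m, T1 i.succ 0 = 0 := by
      intro i
      have v3 : (((1:Fin (m+3)).succAbove i.succ.succ) : ℕ) = (i:ℕ)+3 := by
        rw [sa1]; simp [Fin.val_succ]
      rw [hT1col]
      refine Bmat_eq_zero _ _ _ _ ?_ ?_ ?_ <;> rw [v3, v1] <;> omega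
    rw [g0]
    simp only [g1, zero_mul, mul_zero, Finset.sum_const_zero, add_zero,
      Fin.val_zero, pow_zero, one_mul, ← hT2def]
  -- T2 = Bmat d m
  have hT2 : T2 = Bmat d m := by
    ext a b
    rw [hT2def]
    show T1 ((0:Fin (m+1)).succAbove a) b.succ = _
    rw [Fin.succAbove_zero]
    show S a.succ.succ ((1:Fin (m+2)).succAbove b.succ) = _
    rw [hS]
    refine Bmat_congr d _ _ _ _ (c := 3) ?_ ?_
    · rw [sa1]; simp [Fin.val_succ]
    · rw [Fin.val_succ, sa1]; simp [Fin.val_succ]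
  rw [h0, h1, h2, hT0, hT2]
  ring

lemma genPascal_factor (d : ℂ) (n : ℕ) :
    genPascal (fun i => (i : ℂ) * d) (fun i => (i : ℂ) ^ 2) n
      = lowerL ℂ n * Bmat d n * (lowerL ℂ n)ᵀ := by
  ext i j
  show pascalEntry (fun i => (i : ℂ) * d) (fun i => (i : ℂ) ^ 2) (i:ℕ) (j:ℕ) = _
  rw [pascal_closed, mulEntry, Nat.add_comm 1 (j:ℕ), Nat.add_comm 1 (i:ℕ), Nat.add_comm 2 (i:ℕ)]

lemma det_genPascal (d : ℂ) (n : ℕ) :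
    (genPascal (fun i => (i : ℂ) * d) (fun i => (i : ℂ) ^ 2) n).det = (Bmat d n).det := by
  rw [genPascal_factor, Matrix.det_mul, Matrix.det_mul, det_lowerL, Matrix.det_transpose,
    det_lowerL]
  ring

/-- for `α_i = i d` and the square sequence `β_i = i²`, the determinants
`D(n) = det(P_{α,β}(n))`, `D(0) = 1`, satisfy `D(n) = -d D(n-2) + 2 d² D(n-3)` for `n ≥ 3`. -/
theorem det_genPascal_square_rec (d : ℂ)
    (D : ℕ → ℂ) (hD0 : D 0 = 1)
    (hD : ∀ m : ℕ, 0 < m →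
      D m = (genPascal (fun i => (i : ℂ) * d) (fun i => (i : ℂ) ^ 2) m).det)
    (n : ℕ) (hn : 3 ≤ n) :
    D n = -d * D (n - 2) + 2 * d ^ 2 * D (n - 3) := by
  obtain ⟨m, rfl⟩ : ∃ m, n = m + 3 := ⟨n - 3, by omega⟩
  have hn2 : m + 3 - 2 = m + 1 := by omega
  have hn3 : m + 3 - 3 = m := by omega
  have hDm : D m = (Bmat d m).det := by
    cases m with
    | zero => rw [hD0]; exact (Matrix.det_fin_zero).symm
    | succ k => rw [hD (k+1) (by omega), det_genPascal]
  rw [hD (m+3) (by omega), det_genPascal, hn2, hn3, hD (m+1) (by omega), det_genPascal, hDm]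
  exact detB_rec d m
end

section
/- Let α = (α_i)_{i≥0} and β = (β_i)_{i≥0} be two sequences of complex numbers with α_0 = β_0 = γ. If α is a constant sequence (α_i = γ for all i) or β is a constant sequence (β_i = γ for all i), then for every positive integer n, det(P_{α,β}(n)) = γ^n. -/
open Matrix

lemma alt_sum_complex (k : ℕ) :
    ∑ m ∈ Finset.range (k+1), (-1:ℂ)^m * (k.choose m : ℂ) = if k = 0 then 1 else 0 := by
  have h := Int.alternating_sum_range_choose (n := k)
  have h2 := congrArg (fun z : ℤ => (z : ℂ)) h
  push_cast at h2
  simpa using h2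

lemma hatSeq_const (γ : ℂ) (k : ℕ) : hatSeq (fun _ => γ) k = if k = 0 then γ else 0 := by
  unfold hatSeq
  have : ∑ m ∈ Finset.range (k+1), (-1:ℂ)^(k+m) * (k.choose m : ℂ) * γ
      = ((-1:ℂ)^k * γ) * ∑ m ∈ Finset.range (k+1), (-1:ℂ)^m * (k.choose m : ℂ) := by
    rw [Finset.mul_sum]
    exact Finset.sum_congr rfl (fun m _ => by rw [pow_add]; ring)
  rw [this, alt_sum_complex]
  by_cases hk : k = 0 <;> simp [hk]

lemma hatSeq_add (a b : ℕ → ℂ) (k : ℕ) :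
    hatSeq (fun m => a m + b m) k = hatSeq a k + hatSeq b k := by
  unfold hatSeq
  rw [← Finset.sum_add_distrib]
  exact Finset.sum_congr rfl (fun m _ => by ring)

lemma hatSeq_succ (a : ℕ → ℂ) (k : ℕ) :
    hatSeq a (k+1) = hatSeq (fun m => a (m+1) - a m) k := by
  have aux : ∑ m ∈ Finset.range (k+1), (-1:ℂ)^(k+m) * (k.choose (m+1) : ℂ) * a (m+1)
      = -hatSeq a k + (-1:ℂ)^k * a 0 := by
    have h1 := Finset.sum_range_succ'
      (fun m => (-1:ℂ)^(k+m) * (k.choose m : ℂ) * a m) (k+1)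
    have h2 : ∑ m ∈ Finset.range (k+2), (-1:ℂ)^(k+m) * (k.choose m : ℂ) * a m
        = hatSeq a k := by
      rw [Finset.sum_range_succ]
      simp [hatSeq, Nat.choose_succ_self]
    rw [h2] at h1
    have h3 : ∑ m ∈ Finset.range (k+1), (-1:ℂ)^(k+(m+1)) * (k.choose (m+1) : ℂ) * a (m+1)
        = -∑ m ∈ Finset.range (k+1), (-1:ℂ)^(k+m) * (k.choose (m+1) : ℂ) * a (m+1) := by
      rw [← Finset.sum_neg_distrib]
      exact Finset.sum_congr rfl (fun m _ => by rw [pow_add, pow_add]; ring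
        )
    rw [h3] at h1
    have : (-1:ℂ)^(k+0) * (k.choose 0 : ℂ) * a 0 = (-1:ℂ)^k * a 0 := by simp
    rw [this] at h1
    linear_combination h1
  unfold hatSeq
  rw [Finset.sum_range_succ']
  have step : ∀ m ∈ Finset.range (k+1),
      (-1:ℂ)^(k+1+(m+1)) * ((k+1).choose (m+1) : ℂ) * a (m+1)
      = (-1:ℂ)^(k+m) * (k.choose m : ℂ) * a (m+1)
        + (-1:ℂ)^(k+m) * (k.choose (m+1) : ℂ) * a (m+1) := by
    intro m _
    rw [show k+1+(m+1) = (k+m)+2 by ring, pow_add, Nat.choose_succ_succ]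
    push_cast
    ring
  rw [Finset.sum_congr rfl step, Finset.sum_add_distrib, aux]
  have : ∑ m ∈ Finset.range (k+1), (-1:ℂ)^(k+m) * (k.choose m : ℂ) * (a (m+1) - a m)
      = ∑ m ∈ Finset.range (k+1), (-1:ℂ)^(k+m) * (k.choose m : ℂ) * a (m+1)
        - ∑ m ∈ Finset.range (k+1), (-1:ℂ)^(k+m) * (k.choose m : ℂ) * a m := by
    rw [← Finset.sum_sub_distrib]
    exact Finset.sum_congr rfl (fun m _ => by ring)
  rw [this]
  unfold hatSeq
  simp [pow_add, pow_succ]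
  ring

noncomputable def Vcol (α β : ℕ → ℂ) (k j : ℕ) : ℂ :=
  hatSeq (fun m => pascalEntry α β m j) k

noncomputable def Scol (α β : ℕ → ℂ) (k j : ℕ) : ℂ :=
  hatSeq (fun m => pascalEntry α β (m+1) j) k

lemma hatSeq_zero (a : ℕ → ℂ) : hatSeq a 0 = a 0 := by simp [hatSeq]

lemma pascal_succ_succ (α β : ℕ → ℂ) (i j : ℕ) :
    pascalEntry α β (i+1) (j+1) = pascalEntry α β i (j+1) + pascalEntry α β (i+1) j := by
  simp [pascalEntry]

lemma pascal_zero (α β : ℕ → ℂ) (i : ℕ) : pascalEntry α β i 0 = α i := by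
  cases i <;> simp [pascalEntry]

section VS
variable (α β : ℕ → ℂ) (γ : ℂ)

lemma Vcol_succ_succ (k j : ℕ) : Vcol α β (k+1) (j+1) = Scol α β k j := by
  unfold Vcol Scol
  rw [hatSeq_succ]
  congr 1
  funext m
  show pascalEntry α β (m+1) (j+1) - pascalEntry α β m (j+1) = _
  rw [pascal_succ_succ]
  ring

lemma Scol_succ (k j : ℕ) : Scol α β k (j+1) = Vcol α β k (j+1) + Scol α β k j := by
  unfold Vcol Scol
  rw [← hatSeq_add]
  congr 1
  funext m
  exact pascal_succ_succ α β m j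

variable (hc : ∀ i, α i = γ)
include hc

lemma Vcol_zero (k : ℕ) : Vcol α β k 0 = if k = 0 then γ else 0 := by
  unfold Vcol
  rw [show (fun m => pascalEntry α β m 0) = fun _ => γ from funext fun m => (pascal_zero α β m).trans (hc m)]
  exact hatSeq_const γ k

lemma Scol_zero (k : ℕ) : Scol α β k 0 = if k = 0 then γ else 0 := by
  unfold Scol
  rw [show (fun m => pascalEntry α β (m+1) 0) = fun _ => γ from funext fun m => (pascal_zero α β (m+1)).trans (hc (m+1))]
  exact hatSeq_const γ k

lemma Scol_eq_zero : ∀ k j, j < k → Scol α β k j = 0 := by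
  intro k
  induction k using Nat.strong_induction_on with
  | _ k ih =>
    intro j
    induction j with
    | zero => intro hk; rw [Scol_zero α β γ hc, if_neg (by omega)]
    | succ j ihj =>
      intro h
      obtain ⟨k', rfl⟩ : ∃ k', k = k'+1 := ⟨k-1, by omega⟩
      rw [Scol_succ, Vcol_succ_succ, ih k' (by omega) j (by omega), ihj (by omega), add_zero]

lemma Scol_diag : ∀ j, Scol α β j j = γ := by
  intro j
  induction j with
  | zero =>
    unfold Scol
    rw [hatSeq_zero]
    exact (pascal_zero α β 1).trans (hc 1)
  | succ j ihj =>
    rw [Scol_succ, Vcol_succ_succ, ihj,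
      Scol_eq_zero α β γ hc (j+1) j (by omega), add_zero]

lemma Vcol_diag : ∀ j, Vcol α β j j = γ := by
  intro j
  cases j with
  | zero => unfold Vcol; rw [hatSeq_zero]; exact (pascal_zero α β 0).trans (hc 0)
  | succ j => rw [Vcol_succ_succ]; exact Scol_diag α β γ hc j

lemma Vcol_eq_zero : ∀ k j, j < k → Vcol α β k j = 0 := by
  intro k j h
  cases j with
  | zero => rw [Vcol_zero α β γ hc, if_neg (by omega)]
  | succ j =>
    obtain ⟨k', rfl⟩ : ∃ k', k = k'+1 := ⟨k-1, by omega⟩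
    rw [Vcol_succ_succ]
    exact Scol_eq_zero α β γ hc k' j (by omega)

end VS

noncomputable def Lm (n : ℕ) : Matrix (Fin n) (Fin n) ℂ :=
  Matrix.of fun i k =>
    if (k:ℕ) ≤ (i:ℕ) then (-1:ℂ)^((i:ℕ)+(k:ℕ)) * ((i:ℕ).choose (k:ℕ) : ℂ) else 0

lemma Lm_mul (α β : ℕ → ℂ) (n : ℕ) (i j : Fin n) :
    (Lm n * genPascal α β n) i j = Vcol α β (i:ℕ) (j:ℕ) := by
  rw [Matrix.mul_apply]
  have h := Fin.sum_univ_eq_sum_range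
    (fun k => (if k ≤ (i:ℕ) then (-1:ℂ)^((i:ℕ)+k) * ((i:ℕ).choose k : ℂ) else 0)
      * pascalEntry α β k (j:ℕ)) n
  rw [show (∑ k : Fin n, Lm n i k * genPascal α β n k j)
      = ∑ k ∈ Finset.range n,
        (if k ≤ (i:ℕ) then (-1:ℂ)^((i:ℕ)+k) * ((i:ℕ).choose k : ℂ) else 0)
          * pascalEntry α β k (j:ℕ) from h]
  rw [← Finset.sum_subset (Finset.range_subset_range.mpr (show (i:ℕ)+1 ≤ n from i.isLt))
    (fun x _ hx => by rw [if_neg (by simpa using hx), zero_mul])]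
  unfold Vcol hatSeq
  refine Finset.sum_congr rfl fun k hk => ?_
  rw [if_pos (by have := Finset.mem_range.mp hk; omega)]

lemma Lm_blockTriangular (n : ℕ) : (Lm n).BlockTriangular OrderDual.toDual := by
  intro i j h
  have : (i:ℕ) < (j:ℕ) := h
  simp only [Lm, Matrix.of_apply, if_neg (Nat.not_le.mpr this)]

lemma core (α β : ℕ → ℂ) (γ : ℂ) (hc : ∀ i, α i = γ) (n : ℕ) :
    (genPascal α β n).det = γ ^ n := by
  have hL : (Lm n).det = 1 := by
    rw [Matrix.det_of_lowerTriangular _ (Lm_blockTriangular n)]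
    refine Finset.prod_eq_one fun i _ => ?_
    simp [Lm, Even.neg_one_pow (⟨(i:ℕ), rfl⟩ : Even ((i:ℕ)+(i:ℕ)))]
  have hU : (Lm n * genPascal α β n).det = γ ^ n := by
    rw [Matrix.det_of_upperTriangular
      (by intro i j h; rw [Lm_mul]; exact Vcol_eq_zero α β γ hc _ _ h)]
    have hdiag : ∀ i : Fin n, (Lm n * genPascal α β n) i i = γ :=
      fun i => (Lm_mul α β n i i).trans (Vcol_diag α β γ hc i)
    rw [Finset.prod_congr rfl (fun i _ => hdiag i), Finset.prod_const,
      Finset.card_univ, Fintype.card_fin]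
  rw [Matrix.det_mul, hL, one_mul] at hU
  exact hU

lemma pascal_symm (α β : ℕ → ℂ) (h0 : α 0 = β 0) :
    ∀ i j, pascalEntry α β i j = pascalEntry β α j i := by
  intro i
  induction i with
  | zero => intro j; cases j <;> simp [pascalEntry, h0]
  | succ i ih =>
    intro j
    induction j with
    | zero => simp [pascalEntry]
    | succ j ihj =>
      rw [pascal_succ_succ, pascal_succ_succ, ih (j+1), ihj]
      ring


/-- if `α` or `β` is the constant sequence `γ` (with `α_0 = β_0 = γ`),
then `det(P_{α,β}(n)) = γ^n`. -/
theorem det_genPascal_constant (α β : ℕ → ℂ) (γ : ℂ) (hα : α 0 = γ) (hβ : β 0 = γ)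
    (hconst : (∀ i, α i = γ) ∨ (∀ i, β i = γ)) (n : ℕ) (hn : 0 < n) :
    (genPascal α β n).det = γ ^ n := by
  rcases hconst with h | h
  · exact core α β γ h n
  · have hsym : genPascal α β n = (genPascal β α n)ᵀ := by
      ext i j
      exact pascal_symm α β (hα.trans hβ.symm) i j
    rw [hsym, Matrix.det_transpose]
    exact core β α γ h n
end
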